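/- Let S be a commutative ring, t ∈ S, and E a finitely generated S-module which is also a module over S/(t^m) for some m ≥ 2 (i.e., t^mE = 0). Suppose (a) E/t^{m-1}E is flat over K[t]/(t^{m-1}) and (b) the annihilator of t^{m-1} in E equals tE, where E is a K[t]/(t^m)-module via a ring map K[t]/(t^m) → S/(t^m). Then E is flat over K[t]/(t^m). -/

import Mathlib

noncomputable section
open Polynomial TensorProduct

variable (K : Type) [Field K] (S : Type) [CommRing S] (t : S)
  (E : Type) [AddCommGroup E] [Module S E] [Module (Polynomial K) E]

/-- The submodule `X^k E` of `E` (equal to `t^k E` under the compatibility below). -/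
def XE (k : ℕ) : Submodule (Polynomial K) E :=
  LinearMap.range (LinearMap.lsmul (Polynomial K) E ((X : Polynomial K)^k))

lemma quot_tor (k : ℕ) :
    Module.IsTorsionBySet (Polynomial K) (E ⧸ XE K E k)
      (Ideal.span {(X : Polynomial K)^k} : Ideal (Polynomial K)) := by
  rw [← Module.isTorsionBySet_iff_is_torsion_by_span, Module.isTorsionBySet_singleton_iff]
  intro x
  obtain ⟨e, rfl⟩ := Submodule.Quotient.mk_surjective _ x
  rw [← Submodule.Quotient.mk_smul, Submodule.Quotient.mk_eq_zero]
  exact ⟨e, rfl⟩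

lemma full_tor (m : ℕ) (hcompat : ∀ e : E, (X : Polynomial K) • e = t • e)
    (htor : ∀ e : E, t^m • e = 0) :
    Module.IsTorsionBySet (Polynomial K) E
      (Ideal.span {(X : Polynomial K)^m} : Ideal (Polynomial K)) := by
  rw [← Module.isTorsionBySet_iff_is_torsion_by_span, Module.isTorsionBySet_singleton_iff]
  have key : ∀ n : ℕ, ∀ e : E, (X : Polynomial K)^n • e = t^n • e := by
    intro n
    induction n with
    | zero => simp
    | succ n ih =>
      intro e
      rw [pow_succ, pow_succ, mul_smul, mul_smul, hcompat, ih]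
  intro e
  rw [key]
  exact htor e


lemma exists_tmul_rep {R : Type*} [CommRing R] {M : Type*} [AddCommGroup M] [Module R M]
    (x : R) (z : (Ideal.span {x} : Ideal R) ⊗[R] M) :
    ∃ m : M, z = (⟨x, Ideal.mem_span_singleton_self x⟩ : Ideal.span {x}) ⊗ₜ[R] m := by
  induction z using TensorProduct.induction_on with
  | zero => exact ⟨0, (TensorProduct.tmul_zero _ _).symm⟩
  | tmul i m =>
      obtain ⟨a, ha⟩ := Ideal.mem_span_singleton'.mp i.2
      refine ⟨a • m, ?_⟩
      have hi : i = a • (⟨x, Ideal.mem_span_singleton_self x⟩ : Ideal.span {x}) :=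
        Subtype.ext (by simp [← ha, mul_comm])
      rw [hi, TensorProduct.smul_tmul]
  | add z1 z2 ih1 ih2 =>
      obtain ⟨m1, rfl⟩ := ih1; obtain ⟨m2, rfl⟩ := ih2
      exact ⟨m1 + m2, (TensorProduct.tmul_add _ _ _).symm⟩

lemma rTensor_injective_of {R : Type*} [CommRing R] {M : Type*} [AddCommGroup M] [Module R M]
    (x w : R) (hw : w * x = 0)
    (hx : ∀ m : M, x • m = 0 → ∃ m', m = w • m') :
    Function.Injective (LinearMap.rTensor M (Ideal.span {x} : Ideal R).subtype) := by
  rw [injective_iff_map_eq_zero]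
  intro z hz
  obtain ⟨m, rfl⟩ := exists_tmul_rep x z
  rw [LinearMap.rTensor_tmul] at hz
  have hxm : x • m = 0 := by
    have := congrArg (TensorProduct.lid R M) hz
    simpa using this
  obtain ⟨m', rfl⟩ := hx m hxm
  have hx0 : w • (⟨x, Ideal.mem_span_singleton_self x⟩ : Ideal.span {x}) = 0 :=
    Subtype.ext (by simp [smul_eq_mul, hw])
  rw [← TensorProduct.smul_tmul, hx0, TensorProduct.zero_tmul]

lemma mem_ann_smul_of_rTensor_injective {R : Type*} [CommRing R] {M : Type*} [AddCommGroup M]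
    [Module R M] (x : R)
    (hinj : Function.Injective (LinearMap.rTensor M (Ideal.span {x} : Ideal R).subtype))
    (m : M) (hm : x • m = 0) :
    m ∈ ((LinearMap.ker (LinearMap.toSpanSingleton R R x) : Ideal R) • (⊤ : Submodule R M)) := by
  set f := LinearMap.toSpanSingleton R R x with hf
  have hs : (Ideal.span {x} : Ideal R) = LinearMap.range f := by
    rw [← Ideal.submodule_span_eq]
    exact LinearMap.span_singleton_eq_range R R x
  rw [hs] at hinj
  have hx : x ∈ LinearMap.range f := ⟨1, by simp [hf]⟩
  have h0 : ((⟨x, hx⟩ : LinearMap.range f) ⊗ₜ[R] m) = 0 := by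
    apply hinj
    apply (TensorProduct.lid R M).injective
    simp [hm]
  set J : Ideal R := LinearMap.ker f with hJ
  let β : R →ₗ[R] M →ₗ[R] M ⧸ (J • ⊤ : Submodule R M) :=
    (LinearMap.lsmul R M).compr₂ (J • ⊤ : Submodule R M).mkQ
  have hker : J ≤ LinearMap.ker β := by
    intro a haJ
    rw [LinearMap.mem_ker]
    ext n
    simp only [β, LinearMap.compr₂_apply, LinearMap.lsmul_apply, Submodule.mkQ_apply,
      LinearMap.zero_apply]
    rw [Submodule.Quotient.mk_eq_zero]
    exact Submodule.smul_mem_smul haJ trivial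
  let βbar : R ⧸ J →ₗ[R] M →ₗ[R] M ⧸ (J • ⊤ : Submodule R M) := Submodule.liftQ J β hker
  let φ : LinearMap.range f →ₗ[R] M →ₗ[R] M ⧸ (J • ⊤ : Submodule R M) :=
    βbar ∘ₗ (f.quotKerEquivRange.symm : LinearMap.range f →ₗ[R] R ⧸ J)
  let g := TensorProduct.lift φ
  have h1 : f.quotKerEquivRange.symm ⟨x, hx⟩ = Submodule.Quotient.mk 1 := by
    rw [LinearEquiv.symm_apply_eq]
    exact Subtype.ext (by rw [f.quotKerEquivRange_apply_mk]; simp [hf])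
  have hg : g ((⟨x, hx⟩ : LinearMap.range f) ⊗ₜ[R] m) = Submodule.Quotient.mk m := by
    have : g ((⟨x, hx⟩ : LinearMap.range f) ⊗ₜ[R] m) = φ ⟨x, hx⟩ m := rfl
    rw [this]
    show βbar (f.quotKerEquivRange.symm ⟨x, hx⟩) m = _
    rw [h1]
    show β 1 m = _
    simp [β]
  have : (Submodule.Quotient.mk m : M ⧸ (J • ⊤ : Submodule R M)) = 0 := by
    rw [← hg, h0, map_zero]
  exact (Submodule.Quotient.mk_eq_zero _).mp this

lemma mem_span_singleton_smul_top {R : Type*} [CommRing R] {M : Type*} [AddCommGroup M]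
    [Module R M] (y : R) (m : M)
    (h : m ∈ ((Ideal.span {y} : Ideal R) • (⊤ : Submodule R M))) : ∃ f, m = y • f := by
  refine Submodule.smul_induction_on h ?_ ?_
  · intro r hr n _
    obtain ⟨c, hc⟩ := Ideal.mem_span_singleton'.mp hr
    exact ⟨c • n, by rw [← hc, mul_comm, mul_smul]⟩
  · rintro a b ⟨f1, rfl⟩ ⟨f2, rfl⟩; exact ⟨f1 + f2, (smul_add _ _ _).symm⟩

lemma ideals_classified (K : Type) [Field K] (n : ℕ)
    (I : Ideal (Polynomial K ⧸ Ideal.span {(X : Polynomial K)^n})) :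
    ∃ k ≤ n, I = Ideal.span
      {Ideal.Quotient.mk (Ideal.span {(X : Polynomial K)^n}) ((X : Polynomial K)^k)} := by
  obtain ⟨p, hp⟩ := IsPrincipalIdealRing.principal
    (I.comap (Ideal.Quotient.mk (Ideal.span {(X : Polynomial K)^n})))
  have hmem : (X : Polynomial K)^n ∈ I.comap (Ideal.Quotient.mk _) := by
    rw [Ideal.mem_comap, Ideal.Quotient.eq_zero_iff_mem.mpr (Ideal.mem_span_singleton_self _)]
    exact I.zero_mem
  rw [hp] at hmem
  have hdvd : p ∣ (X : Polynomial K)^n := by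
    rwa [Ideal.submodule_span_eq, Ideal.mem_span_singleton] at hmem
  obtain ⟨k, hk, hassoc⟩ := (dvd_prime_pow Polynomial.prime_X n).mp hdvd
  refine ⟨k, hk, ?_⟩
  have hI : I = Ideal.map (Ideal.Quotient.mk _) (I.comap (Ideal.Quotient.mk _)) :=
    (Ideal.map_comap_of_surjective _ Ideal.Quotient.mk_surjective I).symm
  rw [hI, hp, Ideal.submodule_span_eq,
    Ideal.span_singleton_eq_span_singleton.mpr hassoc, Ideal.map_span, Set.image_singleton]

lemma ann_lemma (K : Type) [Field K] (n j : ℕ) (hj : j ≤ n)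
    (a : Polynomial K ⧸ Ideal.span {(X : Polynomial K)^n})
    (h : a * Ideal.Quotient.mk _ ((X : Polynomial K)^j) = 0) :
    a ∈ Ideal.span
      {Ideal.Quotient.mk (Ideal.span {(X : Polynomial K)^n}) ((X : Polynomial K)^(n-j))} := by
  obtain ⟨f, rfl⟩ := Ideal.Quotient.mk_surjective a
  rw [← map_mul, Ideal.Quotient.eq_zero_iff_mem, Ideal.mem_span_singleton] at h
  have hpow : (X : Polynomial K)^n = (X : Polynomial K)^(n-j) * (X : Polynomial K)^j := by
    rw [← pow_add]; congr 1; omega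
  rw [hpow] at h
  have h2 : (X : Polynomial K)^(n-j) ∣ f :=
    (mul_dvd_mul_iff_right (pow_ne_zero j (Polynomial.X_ne_zero (R := K)))).mp h
  obtain ⟨g, hg⟩ := h2
  rw [Ideal.mem_span_singleton]
  exact ⟨Ideal.Quotient.mk _ g, by rw [← map_mul, hg]⟩

set_option maxHeartbeats 1000000 in
set_option synthInstance.maxHeartbeats 200000 in
/-- **local criterion of flatness.** Let `E` be a finitely generated module
over `S`, killed by `t^m` (`m ≥ 2`), viewed as a `K[t]`-module with `t` acting as `t ∈ S`.
If (a) `E/t^{m-1}E` is flat over `K[t]/(t^{m-1})` and (b) the annihilator of `t^{m-1}`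
in `E` is `tE`, then `E` is flat over `K[t]/(t^m)`. -/
theorem local_flatness_criterion
    [Module.Finite S E]
    (m : ℕ) (hm : 2 ≤ m)
    (hcompat : ∀ e : E, (X : Polynomial K) • e = t • e)
    (htor : ∀ e : E, t^m • e = 0)
    (ha : letI := (quot_tor K E (m-1)).module
      Module.Flat (Polynomial K ⧸ Ideal.span {(X : Polynomial K)^(m-1)}) (E ⧸ XE K E (m-1)))
    (hb : ∀ e : E, t^(m-1) • e = 0 ↔ e ∈ LinearMap.range (LinearMap.lsmul S E t)) :
    letI := (full_tor K S t E m hcompat htor).module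
    Module.Flat (Polynomial K ⧸ Ideal.span {(X : Polynomial K)^m}) E := by
  letI := (full_tor K S t E m hcompat htor).module
  letI := (quot_tor K E (m-1)).module
  have key : ∀ n : ℕ, ∀ e : E, (X : Polynomial K)^n • e = t^n • e := by
    intro n
    induction n with
    | zero => simp
    | succ n ih =>
      intro e
      rw [pow_succ, pow_succ, mul_smul, mul_smul, hcompat, ih]
  have hsmE : ∀ (p : Polynomial K) (e : E),
      (Ideal.Quotient.mk (Ideal.span {(X : Polynomial K)^m}) p) • e = p • e := fun _ _ => rfl
  have hsmQ : ∀ (p : Polynomial K) (e : E ⧸ XE K E (m-1)),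
      (Ideal.Quotient.mk (Ideal.span {(X : Polynomial K)^(m-1)}) p) • e = p • e :=
    fun _ _ => rfl
  show Module.Flat (Polynomial K ⧸ Ideal.span {(X : Polynomial K)^m}) E
  rw [Module.Flat.iff_rTensor_injective']
  intro I
  obtain ⟨k, hk, rfl⟩ := ideals_classified K m I
  apply rTensor_injective_of _ (Ideal.Quotient.mk _ ((X : Polynomial K)^(m-k)))
  · rw [← map_mul, ← pow_add]
    have harith : m - k + k = m := by omega
    rw [harith, Ideal.Quotient.eq_zero_iff_mem]
    exact Ideal.mem_span_singleton_self _
  · intro e he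
    rw [hsmE, key] at he
    rcases Nat.eq_zero_or_pos k with hk0 | hk1
    · subst hk0
      simp only [pow_zero, one_smul] at he
      exact ⟨0, by rw [he, smul_zero]⟩
    rcases eq_or_lt_of_le hk with hkm | hkm
    · subst hkm
      refine ⟨e, ?_⟩
      rw [hsmE]
      simp
    -- main case : 1 ≤ k < m
    have hkn : k ≤ m - 1 := by omega
    have hxk : (Ideal.Quotient.mk (Ideal.span {(X : Polynomial K)^(m-1)})
        ((X : Polynomial K)^k)) • (Submodule.Quotient.mk e : E ⧸ XE K E (m-1)) = 0 := by
      have hXe : (X : Polynomial K)^k • e = 0 := by rw [key]; exact he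
      rw [hsmQ, ← Submodule.Quotient.mk_smul, hXe, Submodule.Quotient.mk_zero]
    have hinj := (Module.Flat.iff_rTensor_injective').mp ha
      (Ideal.span {Ideal.Quotient.mk (Ideal.span {(X : Polynomial K)^(m-1)})
        ((X : Polynomial K)^k)})
    have hmem := mem_ann_smul_of_rTensor_injective _ hinj _ hxk
    have hJle : (LinearMap.ker (LinearMap.toSpanSingleton
          (Polynomial K ⧸ Ideal.span {(X : Polynomial K)^(m-1)})
          (Polynomial K ⧸ Ideal.span {(X : Polynomial K)^(m-1)})
          (Ideal.Quotient.mk _ ((X : Polynomial K)^k))) : Ideal _) ≤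
        Ideal.span {Ideal.Quotient.mk (Ideal.span {(X : Polynomial K)^(m-1)})
          ((X : Polynomial K)^((m-1)-k))} := by
      intro a haa
      rw [LinearMap.mem_ker, LinearMap.toSpanSingleton_apply, smul_eq_mul] at haa
      exact ann_lemma K (m-1) k hkn a haa
    have hmem2 := Submodule.smul_mono_left hJle hmem
    obtain ⟨fbar, hf⟩ := mem_span_singleton_smul_top _ _ hmem2
    obtain ⟨f, rfl⟩ := Submodule.Quotient.mk_surjective _ fbar
    rw [hsmQ, ← Submodule.Quotient.mk_smul] at hf
    obtain ⟨h, hh⟩ := (Submodule.Quotient.eq _).mp hf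
    simp only [LinearMap.lsmul_apply] at hh
    simp only [key] at hh
    -- hh : t^(m-1) • h = e - t^((m-1)-k) • f
    have he2 : e = t^((m-1)-k) • f + t^(m-1) • h := by
      rw [hh]; abel
    have h1 : t^((m-1)+k) • h = 0 := by
      have hnk : (m-1) + k = (k-1) + m := by omega
      rw [hnk, pow_add, mul_smul, htor, smul_zero]
    have hng : t^(m-1) • (f + t^k • h) = 0 := by
      have h2 : k + ((m-1)-k) = m-1 := by omega
      have h3 : k + (m-1) = (m-1) + k := by omega
      have step1 : t^(m-1) • (f + t^k • h) = t^(m-1) • f := by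
        rw [smul_add, smul_smul, ← pow_add, h1, add_zero]
      have step2 : t^k • e = t^(m-1) • f := by
        rw [he2, smul_add, smul_smul, ← pow_add, h2, smul_smul, ← pow_add, h3, h1, add_zero]
      rw [step1, ← step2]
      exact he
    obtain ⟨u, hu⟩ := (hb (f + t^k • h)).mp hng
    simp only [LinearMap.lsmul_apply] at hu
    have h4 : (m-1) - k + k = m-1 := by omega
    have hfinal : t^((m-1)-k) • (f + t^k • h) = e := by
      rw [smul_add, smul_smul, ← pow_add, h4, ← he2]
    refine ⟨u, ?_⟩
    rw [hsmE, key]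
    have h5 : m - k = ((m-1) - k) + 1 := by omega
    rw [h5, pow_add, pow_one, mul_smul, hu]
    exact hfinal.symm
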